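/- Let C be a semisimple abelian monoidal category with biexact tensor product. Then for every algebra A in C, the unit u_A : 1 → A is a regular morphism, and hence the functor - ⊗ A : C → Mod_A(C) is semiseparable. -/

import Mathlib

/-!
STATEMENT 4: Let `C` be a semisimple abelian monoidal category with biexact tensor
product. Then for every algebra `A` in `C`, the unit `u_A : 𝟙_C ⟶ A` is a regular
morphism, and hence the free module functor `C ⥤ Mod_A(C)` is semiseparable.
-/

open CategoryTheory CategoryTheory.Limits MonoidalCategory

universe v u v₂ u₂

attribute [local instance] CategoryTheory.Limits.HasFiniteBiproducts.of_hasFiniteProducts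

/-- A morphism `f` is regular if there is `g` with `f ≫ g ≫ f = f`. -/
def CategoryTheory.IsRegularHom {C : Type u} [Category.{v} C] {X Y : C} (f : X ⟶ Y) : Prop :=
  ∃ g : Y ⟶ X, f ≫ g ≫ f = f

/-- A category is semisimple if every object is a finite direct sum (biproduct)
of simple objects. -/
def CategoryTheory.IsSemisimple (C : Type u) [Category.{v} C] [HasZeroMorphisms C]
    [HasFiniteBiproducts C] : Prop :=
  ∀ X : C, ∃ (ι : Type) (_ : Fintype ι) (S : ι → C) (_ : ∀ i, Simple (S i)),
    Nonempty (X ≅ ⨁ S)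

/-- The data exhibiting a functor `F` as semiseparable: a natural transformation
`ψ : Hom(F-,F-) → Hom(-,-)` with `φ ∘ ψ ∘ φ = φ`, where `φ` is given by `F`. -/
structure CategoryTheory.Functor.SemiseparabilityStructure {C : Type u} [Category.{v} C]
    {D : Type u₂} [Category.{v₂} D] (F : C ⥤ D) where
  retr : ∀ {X Y : C}, (F.obj X ⟶ F.obj Y) → (X ⟶ Y)
  naturality : ∀ {X X' Y Y' : C} (u : X' ⟶ X) (v : Y ⟶ Y') (h : F.obj X ⟶ F.obj Y),
    retr (F.map u ≫ h ≫ F.map v) = u ≫ retr h ≫ v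
  map_retr_map : ∀ {X Y : C} (f : X ⟶ Y), F.map (retr (F.map f)) = F.map f

/-- A functor `F` is semiseparable if `φ ∘ ψ ∘ φ = φ` for some natural `ψ`. -/
def CategoryTheory.Functor.Semiseparable {C : Type u} [Category.{v} C]
    {D : Type u₂} [Category.{v₂} D] (F : C ⥤ D) : Prop :=
  Nonempty F.SemiseparabilityStructure

/-- The free module functor by an algebra `A`, sending `M` to the free `A`-module `A ⊗ M`. -/
def freeMod {C : Type u} [Category.{v} C] [MonoidalCategory C] (A : Mon C) : C ⥤ Mod C A.X where
  obj M :=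
    { X := A.X ⊗ M
      mod :=
        { smul := (α_ A.X A.X M).inv ≫ (MonObj.mul ▷ M)
          one_smul := by
            dsimp
            rw [associator_inv_naturality_left_assoc, ← comp_whiskerRight, MonObj.one_mul,
              leftUnitor_tensor_hom]
          mul_smul := by
            dsimp
            slice_lhs 1 2 => rw [associator_inv_naturality_left]
            slice_lhs 2 3 => rw [← comp_whiskerRight, MonObj.mul_assoc]
            simp only [MonoidalCategory.whiskerLeft_comp, comp_whiskerRight, Category.assoc]
            coherence } }
  map f := Mod.Hom.mk' (A.X ◁ f) (by
        change ((α_ A.X A.X _).inv ≫ (MonObj.mul ▷ _)) ≫ A.X ◁ f =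
          A.X ◁ A.X ◁ f ≫ ((α_ A.X A.X _).inv ≫ (MonObj.mul ▷ _))
        rw [Category.assoc, ← whisker_exchange, associator_inv_naturality_right_assoc])
  map_id M := by ext; exact MonoidalCategory.whiskerLeft_id A.X M
  map_comp f g := by ext; exact MonoidalCategory.whiskerLeft_comp A.X f g

section Aux

variable {C : Type u} [Category.{v} C] [Abelian C]

theorem aux_mono_biproduct_splits (hC : CategoryTheory.IsSemisimple C) (n : ℕ) :
    ∀ (ι : Type) (instι : Fintype ι), Fintype.card ι = n →
      ∀ (S : ι → C), (∀ i, Simple (S i)) → ∀ (X : C) (m : X ⟶ ⨁ S), Mono m →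
      ∃ r : (⨁ S) ⟶ X, m ≫ r = 𝟙 X := by
  classical
  induction n with
  | zero =>
    intro ι instι hcard S hS X m hm
    haveI : IsEmpty ι := Fintype.card_eq_zero_iff.mp hcard
    have hm0 : m = 0 := by
      apply biproduct.hom_ext
      intro j
      exact isEmptyElim j
    refine ⟨0, ?_⟩
    have : 𝟙 X ≫ m = 0 ≫ m := by simp [hm0]
    rw [comp_zero]
    exact ((cancel_mono m).mp this).symm
  | succ n IH =>
    intro ι instι hcard S hS X m hm
    haveI : Nonempty ι := Fintype.card_pos_iff.mp (by omega)
    obtain ⟨j0⟩ := ‹Nonempty ι›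
    set p : ι → Prop := fun j => ¬ j = j0 with hp
    have hcard' : Fintype.card {j // p j} = n := by
      have : Fintype.card { j // ¬ j = j0 } = n := by
        rw [Fintype.card_subtype_compl, Fintype.card_subtype_eq, hcard]; omega
      convert this using 2
    set e : X ⟶ S j0 := m ≫ biproduct.π S j0 with he_def
    by_cases he : e = 0
    · -- m factors through the complement
      set n0 : X ⟶ ⨁ Subtype.restrict p S := m ≫ biproduct.toSubtype S p with hn0
      have hfac : n0 ≫ biproduct.fromSubtype S p = m := by
        apply biproduct.hom_ext
        intro j
        by_cases hj : p j
        · rw [Category.assoc, biproduct.fromSubtype_π]; simp only [hj, ↓reduceDIte]; exact (Category.assoc _ _ _).trans (congrArg (m ≫ ·) (biproduct.toSubtype_π S p ⟨j, hj⟩))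
        · have hj' : j = j0 := not_not.mp hj
          subst hj'
          rw [Category.assoc, biproduct.fromSubtype_π]; simp only [hj, ↓reduceDIte]; rw [comp_zero]
          exact he.symm
      haveI : Mono n0 := by
        have : Mono (n0 ≫ biproduct.fromSubtype S p) := by rw [hfac]; exact hm
        exact mono_of_mono n0 (biproduct.fromSubtype S p)
      obtain ⟨r', hr'⟩ := IH {j // p j} inferInstance hcard' (Subtype.restrict p S)
        (fun j => hS j) X n0 ‹Mono n0›
      refine ⟨biproduct.toSubtype S p ≫ r', ?_⟩
      rw [← Category.assoc, ← hn0, hr']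
    · -- e is a nonzero map to a simple object, hence epi; it splits
      haveI : Simple (S j0) := hS j0
      haveI hepi : Epi e := epi_of_nonzero_to_simple he
      -- find a section of e using semisimplicity of X
      obtain ⟨κ, instκ, T, hT, ⟨hX⟩⟩ := hC X
      have hsec : ∃ s : S j0 ⟶ X, s ≫ e = 𝟙 (S j0) := by
        by_cases hz : ∀ i, biproduct.ι T i ≫ (hX.inv ≫ e) = 0
        · exfalso
          have : hX.inv ≫ e = 0 := by
            apply biproduct.hom_ext'
            intro i
            simpa using hz i
          have he0 : e = 0 := by
            have := congrArg (fun q => hX.hom ≫ q) this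
            simpa using this
          exact he he0
        · push_neg at hz
          obtain ⟨i, hi⟩ := hz
          haveI : Simple (T i) := hT i
          haveI : IsIso (biproduct.ι T i ≫ hX.inv ≫ e) := isIso_of_hom_simple hi
          refine ⟨inv (biproduct.ι T i ≫ hX.inv ≫ e) ≫ biproduct.ι T i ≫ hX.inv, ?_⟩
          rw [Category.assoc, Category.assoc, IsIso.inv_hom_id]
      obtain ⟨s, hs⟩ := hsec
      set k : kernel e ⟶ X := kernel.ι e with hk_def
      have hke : k ≫ e = 0 := kernel.condition e
      have ht0 : (𝟙 X - e ≫ s) ≫ e = 0 := by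
        rw [Preadditive.sub_comp, Category.id_comp, Category.assoc, hs, Category.comp_id, sub_self]
      set t : X ⟶ kernel e := kernel.lift e (𝟙 X - e ≫ s) ht0 with ht_def
      have htk : t ≫ k = 𝟙 X - e ≫ s := kernel.lift_ι e _ ht0
      set P : (⨁ S) ⟶ ⨁ Subtype.restrict p S := biproduct.toSubtype S p with hP
      set nn : kernel e ⟶ ⨁ Subtype.restrict p S := k ≫ m ≫ P with hnn
      have hfac : nn ≫ biproduct.fromSubtype S p = k ≫ m := by
        apply biproduct.hom_ext
        intro j
        by_cases hj : p j
        · rw [Category.assoc, biproduct.fromSubtype_π]; simp only [hj, ↓reduceDIte]; exact (Category.assoc _ _ _).trans (congrArg (k ≫ ·) ((Category.assoc _ _ _).trans (congrArg (m ≫ ·) (biproduct.toSubtype_π S p ⟨j, hj⟩)))) |>.trans (Category.assoc _ _ _).symm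
        · have hj' : j = j0 := not_not.mp hj
          subst hj'
          rw [Category.assoc, biproduct.fromSubtype_π]; simp only [hj, ↓reduceDIte]; rw [comp_zero, Category.assoc,
            ← he_def, hke]
      haveI hmkm : Mono (k ≫ m) := mono_comp k m
      haveI : Mono nn := by
        have : Mono (nn ≫ biproduct.fromSubtype S p) := by rw [hfac]; exact hmkm
        exact mono_of_mono nn (biproduct.fromSubtype S p)
      obtain ⟨r', hr'⟩ := IH {j // p j} inferInstance hcard' (Subtype.restrict p S)
        (fun j => hS j) (kernel e) nn ‹Mono nn›
      refine ⟨P ≫ r' ≫ k + biproduct.π S j0 ≫ (s - s ≫ m ≫ P ≫ r' ≫ k), ?_⟩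
      have hmP : m ≫ P = t ≫ nn + e ≫ s ≫ m ≫ P := by
        conv_lhs => rw [← Category.id_comp (m ≫ P), show (𝟙 X : X ⟶ X) = t ≫ k + e ≫ s from
          by rw [htk]; abel, Preadditive.add_comp]
        rw [hnn]
        simp only [Category.assoc]
      have hcol : nn ≫ r' ≫ k = k := by rw [← Category.assoc, hr', Category.id_comp]
      have A1 : m ≫ P ≫ r' ≫ k = t ≫ k + e ≫ s ≫ m ≫ P ≫ r' ≫ k := by
        have h2 := congrArg (fun z => z ≫ r' ≫ k) hmP
        simp only [Preadditive.add_comp, Category.assoc] at h2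
        conv_lhs => rw [h2]
        rw [hcol]
      have he2 : ∀ {W : C} (z : S j0 ⟶ W), m ≫ biproduct.π S j0 ≫ z = e ≫ z := by
        intro W z
        rw [he_def, Category.assoc]
      conv_lhs => rw [Preadditive.comp_add, he2, Preadditive.comp_sub]
      conv_lhs => lhs; rw [A1]
      try simp only [Category.assoc]
      rw [htk]
      abel

theorem aux_mono_splits (hC : CategoryTheory.IsSemisimple C) {X Y : C} (m : X ⟶ Y) [Mono m] :
    ∃ r : Y ⟶ X, m ≫ r = 𝟙 X := by
  obtain ⟨ι, instι, S, hS, ⟨hY⟩⟩ := hC Y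
  haveI : Mono (m ≫ hY.hom) := mono_comp m hY.hom
  obtain ⟨r, hr⟩ := aux_mono_biproduct_splits hC (Fintype.card ι) ι instι rfl S hS X
    (m ≫ hY.hom) ‹_›
  exact ⟨hY.hom ≫ r, by rw [← Category.assoc]; simpa using hr⟩

theorem aux_epi_splits (hC : CategoryTheory.IsSemisimple C) {X Z : C} (q : X ⟶ Z) [Epi q] :
    ∃ s : Z ⟶ X, s ≫ q = 𝟙 Z := by
  obtain ⟨r, hr⟩ := aux_mono_splits hC (kernel.ι q)
  have hw : kernel.ι q ≫ (𝟙 X - r ≫ kernel.ι q) = 0 := by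
    rw [Preadditive.comp_sub, Category.comp_id, ← Category.assoc, hr, Category.id_comp, sub_self]
  refine ⟨Abelian.epiDesc q (𝟙 X - r ≫ kernel.ι q) hw, ?_⟩
  have h1 : q ≫ Abelian.epiDesc q (𝟙 X - r ≫ kernel.ι q) hw ≫ q = q ≫ 𝟙 Z := by
    rw [← Category.assoc, Abelian.comp_epiDesc, Preadditive.sub_comp, Category.id_comp, Category.assoc,
      kernel.condition, comp_zero, sub_zero, Category.comp_id]
  exact (cancel_epi q).mp h1

theorem aux_regular (hC : CategoryTheory.IsSemisimple C) {X Y : C} (f : X ⟶ Y) :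
    CategoryTheory.IsRegularHom f := by
  obtain ⟨ri, hri⟩ := aux_mono_splits hC (Abelian.image.ι f)
  obtain ⟨sp, hsp⟩ := aux_epi_splits hC (Abelian.factorThruImage f)
  refine ⟨ri ≫ sp, ?_⟩
  have hstep : f ≫ (ri ≫ sp) ≫ f =
      (Abelian.factorThruImage f ≫ Abelian.image.ι f) ≫ (ri ≫ sp) ≫
        Abelian.factorThruImage f ≫ Abelian.image.ι f := by
    rw [Abelian.image.fac]
  rw [hstep]
  slice_lhs 2 3 => rw [hri]
  slice_lhs 2 4 => rw [Category.id_comp, hsp]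
  rw [Category.id_comp, Abelian.image.fac]

end Aux

section Main

variable {C : Type u} [Category.{v} C] [MonoidalCategory C] (A : Mon C)

@[simp] lemma freeMod_map_hom {X Y : C} (f : X ⟶ Y) :
    ((freeMod A).map f).hom = A.X ◁ f := rfl

theorem freeMod_semiseparable_of_regular {g : A.X ⟶ 𝟙_ C}
    (hg : (MonObj.one : 𝟙_ C ⟶ A.X) ≫ g ≫ (MonObj.one : 𝟙_ C ⟶ A.X) = (MonObj.one : 𝟙_ C ⟶ A.X)) : (freeMod A).Semiseparable := by
  refine ⟨⟨fun {X Y} h => (λ_ X).inv ≫ ((MonObj.one : 𝟙_ C ⟶ A.X) ▷ X) ≫ h.hom ≫ (g ▷ Y) ≫ (λ_ Y).hom, ?_, ?_⟩⟩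
  · intro X X' Y Y' u v h
    simp only [Mod.comp_hom', freeMod_map_hom]
    dsimp only [freeMod]
    slice_lhs 2 3 => rw [← whisker_exchange]
    slice_lhs 1 2 => rw [← leftUnitor_inv_naturality]
    slice_lhs 5 6 => rw [whisker_exchange]
    slice_lhs 6 7 => rw [leftUnitor_naturality]
    simp only [Category.assoc]
  · intro X Y f
    ext
    simp only [Mod.comp_hom', freeMod_map_hom]
    dsimp only [freeMod]
    have step1 : (λ_ X).inv ≫ (MonObj.one : 𝟙_ C ⟶ A.X) ▷ X ≫ (A.X ◁ f) ≫ g ▷ Y ≫ (λ_ Y).hom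
        = f ≫ (λ_ Y).inv ≫ (((MonObj.one : 𝟙_ C ⟶ A.X) ≫ g) ▷ Y) ≫ (λ_ Y).hom := by
      slice_lhs 2 3 => rw [← whisker_exchange]
      slice_lhs 1 2 => rw [← leftUnitor_inv_naturality]
      slice_lhs 3 4 => rw [← comp_whiskerRight]
      try simp only [Category.assoc]
    rw [step1, MonoidalCategory.whiskerLeft_comp]
    have habs : ((MonObj.one : 𝟙_ C ⟶ A.X) ≫ g) ≫ (MonObj.one : 𝟙_ C ⟶ A.X) = (MonObj.one : 𝟙_ C ⟶ A.X) := by rw [Category.assoc]; exact hg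
    have hscal : (ρ_ A.X).inv ≫ A.X ◁ ((MonObj.one : 𝟙_ C ⟶ A.X) ≫ g) ≫ (ρ_ A.X).hom = 𝟙 A.X := by
      have h3 : A.X ◁ ((MonObj.one : 𝟙_ C ⟶ A.X) ≫ g) ≫ (ρ_ A.X).hom = (ρ_ A.X).hom := by
        rw [← MonObj.mul_one A.X, ← Category.assoc, ← MonoidalCategory.whiskerLeft_comp, habs]
      rw [h3, Iso.inv_hom_id]
    have hA : A.X ◁ (λ_ Y).inv = (ρ_ A.X).inv ▷ Y ≫ (α_ A.X (𝟙_ C) Y).hom :=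
      (triangle_assoc_comp_right_inv A.X Y).symm
    have hB : A.X ◁ (((MonObj.one : 𝟙_ C ⟶ A.X) ≫ g) ▷ Y) = (α_ A.X (𝟙_ C) Y).inv ≫
        ((A.X ◁ ((MonObj.one : 𝟙_ C ⟶ A.X) ≫ g)) ▷ Y) ≫ (α_ A.X (𝟙_ C) Y).hom := by
      rw [associator_naturality_middle]
      simp
    have hC : A.X ◁ (λ_ Y).hom = (α_ A.X (𝟙_ C) Y).inv ≫ ((ρ_ A.X).hom ▷ Y) :=
      (triangle_assoc_comp_right A.X Y).symm
    have key : A.X ◁ ((λ_ Y).inv ≫ (((MonObj.one : 𝟙_ C ⟶ A.X) ≫ g) ▷ Y) ≫ (λ_ Y).hom) = 𝟙 (A.X ⊗ Y) := by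
      rw [MonoidalCategory.whiskerLeft_comp, MonoidalCategory.whiskerLeft_comp, hA, hB, hC]
      simp only [Category.assoc, Iso.hom_inv_id_assoc]
      simp only [← comp_whiskerRight, Category.assoc]
      rw [hscal]
      simp
    rw [key, Category.comp_id]

end Main


theorem isRegularHom_one_and_freeMod_semiseparable
    (C : Type u) [Category.{v} C] [Abelian C] [MonoidalCategory C] [MonoidalPreadditive C]
    [∀ X : C, PreservesFiniteLimits (tensorLeft X)]
    [∀ X : C, PreservesFiniteColimits (tensorLeft X)]
    [∀ X : C, PreservesFiniteLimits (tensorRight X)]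
    [∀ X : C, PreservesFiniteColimits (tensorRight X)]
    (hC : CategoryTheory.IsSemisimple C) (A : Mon C) :
    CategoryTheory.IsRegularHom (MonObj.one : 𝟙_ C ⟶ A.X) ∧ (freeMod A).Semiseparable := by
  have hreg := aux_regular hC (MonObj.one : 𝟙_ C ⟶ A.X)
  refine ⟨hreg, ?_⟩
  obtain ⟨g, hg⟩ := hreg
  exact freeMod_semiseparable_of_regular A hg
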